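/- If p is a prime and x, y, z are pairwise coprime nonzero integers with x^p + y^p = z^p and p ∤ xyz, then x^(p-1) ≡ 1 (mod p^2), y^(p-1) ≡ 1 (mod p^2), and z^(p-1) ≡ 1 (mod p^2). -/

import Mathlib

open Finset

private lemma geom_aux (a b : ℤ) (n : ℕ) :
    (a - b) ∣ (∑ i ∈ range n, a ^ i * b ^ (n - 1 - i)) - n * b ^ (n - 1) := by
  have h : (n : ℤ) * b ^ (n - 1) = ∑ _i ∈ range n, b ^ (n - 1) := by
    rw [Finset.sum_const, card_range, nsmul_eq_mul]
  rw [h, ← Finset.sum_sub_distrib]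
  apply Finset.dvd_sum
  intro i hi
  have hi' : i < n := mem_range.mp hi
  have he : a ^ i * b ^ (n - 1 - i) - b ^ (n - 1) = (a ^ i - b ^ i) * b ^ (n - 1 - i) := by
    rw [sub_mul]
    congr 1
    rw [← pow_add]
    congr 1
    omega
  rw [he]
  exact dvd_mul_of_dvd_left (sub_dvd_pow_sub_pow a b i) _

/-- Key Barlow-type lemma: if `c ^ p = a ^ p - b ^ p` in the first case, then
`c ^ p ≡ a - b` mod `p ^ 2`. -/
private lemma key_lemma (p : ℕ) (hp : p.Prime) (hodd : Odd p) (a b c : ℤ)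
    (hab : IsCoprime a b) (hc : ¬ (p : ℤ) ∣ c) (h : c ^ p = a ^ p - b ^ p) :
    c ^ p ≡ a - b [ZMOD (p : ℤ) ^ 2] := by
  haveI : Fact p.Prime := ⟨hp⟩
  have hp' : Prime (p : ℤ) := Nat.prime_iff_prime_int.mp hp
  set d : ℤ := a - b with hd
  set S : ℤ := ∑ i ∈ range p, a ^ i * b ^ (p - 1 - i) with hS
  have hdS : d * S = c ^ p := by
    rw [h, mul_comm]
    exact geom_sum₂_mul a b p
  -- d ≢ 0 mod p
  have hpd : ¬ (p : ℤ) ∣ d := by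
    intro hdvd
    exact hc (hp'.dvd_of_dvd_pow (hdS ▸ Dvd.dvd.mul_right hdvd S))
  -- S ≡ p * b^(p-1) mod d
  obtain ⟨k, hk⟩ := geom_aux a b p
  have hSk : S = d * k + (p : ℤ) * b ^ (p - 1) := by
    simp only [hS, hd]
    linarith
  -- coprimality of d and S
  have hdb : IsCoprime d b := by
    have := hab.add_mul_left_left (-1)
    simpa [hd, mul_neg_one, ← sub_eq_add_neg] using this
  have hdpb : IsCoprime d ((p : ℤ) * b ^ (p - 1)) :=
    ((hp'.coprime_iff_not_dvd.mpr hpd).symm).mul_right (hdb.pow_right)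
  have hcop : IsCoprime d S := by
    rw [hSk, add_comm]
    exact hdpb.add_mul_left_right k
  -- S is a p-th power
  have hunit : IsUnit (gcd S d) := by
    have h1 : Int.gcd S d = 1 := Int.isCoprime_iff_gcd_eq_one.mp hcop.symm
    rw [Int.isUnit_iff]
    left
    rw [← Int.coe_gcd, h1]
    rfl
  obtain ⟨s₀, hs₀⟩ := exists_associated_pow_of_mul_eq_pow hunit (by rw [mul_comm]; exact hdS)
  have hsp : ∃ s : ℤ, s ^ p = S := by
    rcases Int.associated_iff.mp hs₀ with h1 | h1
    · exact ⟨s₀, h1⟩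
    · exact ⟨-s₀, by rw [hodd.neg_pow]; linarith⟩
  obtain ⟨s, hsS⟩ := hsp
  -- mod p : S ≡ 1
  have hc0 : (c : ZMod p) ≠ 0 := by
    rw [Ne, ZMod.intCast_zmod_eq_zero_iff_dvd]
    exact hc
  have hdc : (d : ZMod p) = (c : ZMod p) := by
    have : ((c : ZMod p)) ^ p = (d : ZMod p) := by
      push_cast [hd]
      rw [← Int.cast_pow, h]
      push_cast
      rw [ZMod.pow_card, ZMod.pow_card]
    rw [← this, ZMod.pow_card]
  have hS1 : (S : ZMod p) = 1 := by
    have hm : (d : ZMod p) * (S : ZMod p) = (c : ZMod p) := by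
      have := congrArg (fun t : ℤ => (t : ZMod p)) hdS
      push_cast at this
      rw [this, ZMod.pow_card]
    rw [hdc] at hm
    field_simp at hm
    exact (mul_left_cancel₀ hc0 (by rw [hm, mul_one])).symm
  have hs1 : (s : ZMod p) = 1 := by
    rw [← ZMod.pow_card (s : ZMod p), ← Int.cast_pow, hsS, hS1]
  -- s = 1 + p * m
  have hm : (p : ℤ) ∣ s - 1 := by
    rw [← ZMod.intCast_zmod_eq_zero_iff_dvd]
    push_cast
    rw [hs1, sub_self]
  obtain ⟨m, hm⟩ := hm
  -- mod p^2 : S ≡ 1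
  obtain ⟨t, ht⟩ := geom_aux s 1 p
  have hG : (∑ i ∈ range p, s ^ i * (1 : ℤ) ^ (p - 1 - i)) * (s - 1) = s ^ p - 1 := by
    have := geom_sum₂_mul s 1 p
    simpa using this
  have hS2 : ((p : ℤ)) ^ 2 ∣ S - 1 := by
    have hone : (1 : ℤ) ^ (p - 1) = 1 := one_pow _
    refine ⟨m + m ^ 2 * t, ?_⟩
    have hexp : S - 1 = (s - 1) * ((p : ℤ) + (s - 1) * t) := by
      have h2 : (∑ i ∈ range p, s ^ i * (1 : ℤ) ^ (p - 1 - i)) = (p : ℤ) + (s - 1) * t := by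
        rw [hone] at ht
        linarith
      rw [← hsS]
      calc s ^ p - 1 = (∑ i ∈ range p, s ^ i * (1 : ℤ) ^ (p - 1 - i)) * (s - 1) := hG.symm
        _ = (s - 1) * ((p : ℤ) + (s - 1) * t) := by rw [h2]; ring
    rw [hexp, hm]
    ring
  -- conclude
  have : ((p : ℤ)) ^ 2 ∣ (a - b) - c ^ p := by
    have heq : (a - b) - c ^ p = -(d * (S - 1)) := by
      rw [← hdS, hd]; ring
    rw [heq]
    exact dvd_neg.mpr (Dvd.dvd.mul_left hS2 d)
  exact (Int.modEq_iff_dvd.mpr this).symm.symm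

theorem stmt_9 (p : ℕ) (hp : p.Prime) (x y z : ℤ)
    (hx : x ≠ 0) (hy : y ≠ 0) (hz : z ≠ 0)
    (hxy : IsCoprime x y) (hxz : IsCoprime x z) (hyz : IsCoprime y z)
    (hfermat : x ^ p + y ^ p = z ^ p) (hpxyz : ¬ (p : ℤ) ∣ x * y * z) :
    x ^ (p - 1) ≡ 1 [ZMOD (p : ℤ) ^ 2] ∧ y ^ (p - 1) ≡ 1 [ZMOD (p : ℤ) ^ 2] ∧
      z ^ (p - 1) ≡ 1 [ZMOD (p : ℤ) ^ 2] := by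
  have hp' : Prime (p : ℤ) := Nat.prime_iff_prime_int.mp hp
  have hpx : ¬ (p : ℤ) ∣ x := fun h => hpxyz ((h.mul_right y).mul_right z)
  have hpy : ¬ (p : ℤ) ∣ y := fun h => hpxyz ((h.mul_left x).mul_right z)
  have hpz : ¬ (p : ℤ) ∣ z := fun h => hpxyz (h.mul_left (x * y))
  -- rule out p = 2
  rcases eq_or_ne p 2 with hp2 | hp2
  · exfalso
    subst hp2
    have hox : Odd x := Int.not_even_iff_odd.mp (fun he => hpx (by exact_mod_cast he.two_dvd))
    have hoy : Odd y := Int.not_even_iff_odd.mp (fun he => hpy (by exact_mod_cast he.two_dvd))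
    have hoz : Odd z := Int.not_even_iff_odd.mp (fun he => hpz (by exact_mod_cast he.two_dvd))
    obtain ⟨a, ha⟩ := hox
    obtain ⟨b, hb⟩ := hoy
    obtain ⟨c, hc⟩ := hoz
    obtain ⟨A, hA⟩ : ∃ A : ℤ, x ^ 2 = 4 * A + 1 := ⟨a ^ 2 + a, by rw [ha]; ring⟩
    obtain ⟨B, hB⟩ : ∃ B : ℤ, y ^ 2 = 4 * B + 1 := ⟨b ^ 2 + b, by rw [hb]; ring⟩
    obtain ⟨C, hC⟩ : ∃ C : ℤ, z ^ 2 = 4 * C + 1 := ⟨c ^ 2 + c, by rw [hc]; ring⟩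
    rw [hA, hB, hC] at hfermat
    omega
  have hodd : Odd p := hp.odd_of_ne_two hp2
  -- three applications of the key lemma
  have h1 : x ^ p ≡ z - y [ZMOD (p : ℤ) ^ 2] :=
    key_lemma p hp hodd z y x hyz.symm hpx (by linarith)
  have h2 : y ^ p ≡ z - x [ZMOD (p : ℤ) ^ 2] :=
    key_lemma p hp hodd z x y hxz.symm hpy (by linarith)
  have h3 : z ^ p ≡ x - (-y) [ZMOD (p : ℤ) ^ 2] := by
    refine key_lemma p hp hodd x (-y) z hxy.neg_right hpz ?_
    rw [hodd.neg_pow]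
    linarith
  -- z ≡ x + y mod p^2
  have h12 : x ^ p + y ^ p ≡ (z - y) + (z - x) [ZMOD (p : ℤ) ^ 2] := h1.add h2
  have h3' : x ^ p + y ^ p ≡ x - (-y) [ZMOD (p : ℤ) ^ 2] := hfermat.symm ▸ h3
  have hcomb : ((p : ℤ)) ^ 2 ∣ 2 * ((x + y) - z) := by
    have := (h12.symm.trans h3').dvd
    have heq : (x - (-y)) - ((z - y) + (z - x)) = 2 * ((x + y) - z) := by ring
    rwa [heq] at this
  have hcop2 : IsCoprime (((p : ℤ)) ^ 2) 2 := by
    have hnd : ¬ (p : ℤ) ∣ 2 := by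
      intro hdvd
      have : p ∣ 2 := by exact_mod_cast hdvd
      exact hp2 ((Nat.prime_dvd_prime_iff_eq hp Nat.prime_two).mp this)
    exact (hp'.coprime_iff_not_dvd.mpr hnd).pow_left
  have hzxy : ((p : ℤ)) ^ 2 ∣ (x + y) - z := hcop2.dvd_of_dvd_mul_left hcomb
  -- each variable satisfies v ^ p ≡ v mod p^2
  have hxp : x ^ p ≡ x [ZMOD (p : ℤ) ^ 2] := by
    refine h1.trans (Int.modEq_iff_dvd.mpr ?_)
    have : x - (z - y) = (x + y) - z := by ring
    rwa [this]
  have hyp : y ^ p ≡ y [ZMOD (p : ℤ) ^ 2] := by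
    refine h2.trans (Int.modEq_iff_dvd.mpr ?_)
    have : y - (z - x) = (x + y) - z := by ring
    rwa [this]
  have hzp : z ^ p ≡ z [ZMOD (p : ℤ) ^ 2] := by
    refine h3.trans (Int.modEq_iff_dvd.mpr ?_)
    have : z - (x - (-y)) = -((x + y) - z) := by ring
    rw [this]
    exact hzxy.neg_right
  -- cancel one factor
  have hcancel : ∀ v : ℤ, ¬ (p : ℤ) ∣ v → v ^ p ≡ v [ZMOD (p : ℤ) ^ 2] →
      v ^ (p - 1) ≡ 1 [ZMOD (p : ℤ) ^ 2] := by
    intro v hv hvp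
    have hcopv : IsCoprime (((p : ℤ)) ^ 2) v := (hp'.coprime_iff_not_dvd.mpr hv).pow_left
    have hdvd : ((p : ℤ)) ^ 2 ∣ v * (1 - v ^ (p - 1)) := by
      have := hvp.dvd
      have hp1 : p = (p - 1) + 1 := (Nat.succ_pred_eq_of_pos hp.pos).symm
      have heq : v - v ^ p = v * (1 - v ^ (p - 1)) := by
        conv_lhs => rw [hp1]
        rw [pow_succ]
        ring
      rwa [heq] at this
    have := hcopv.dvd_of_dvd_mul_left hdvd
    have : ((p : ℤ)) ^ 2 ∣ 1 - v ^ (p - 1) := this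
    exact Int.modEq_iff_dvd.mpr this
  exact ⟨hcancel x hpx hxp, hcancel y hpy hyp, hcancel z hpz hzp⟩
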